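/- arXiv:2008.02606 — 3 statements merged into one kernel-verified Lean document; each statement's English description precedes it below -/
import Mathlib

section
/- Let s = a ⊕ v ⊕ z be a Damek-Ricci algebra. Let v' ⊆ v and z' ⊆ z be linear subspaces such that J_Z(v') ⊆ v' for all Z ∈ z'. Let v'' be the orthogonal complement of v' in v and let z'' be the orthogonal complement of z' in z. Then v'' ⊕ z'' is a Lie subalgebra of s if and only if v'' = 0 or z' = 0. -/
open scoped RealInnerProductSpace

/-- Let `s = a ⊕ v ⊕ z = ℝ × v × z` be a Damek-Ricci algebra, with bracket
`[(r,U,X),(r',U',X')] = (0, (r/2)U' - (r'/2)U, [U,U'] + rX' - r'X)`.  Let `v' ⊆ v` and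
`z' ⊆ z` be linear subspaces such that `J_Z(v') ⊆ v'` for all `Z ∈ z'`.  Let `v''` be the
orthogonal complement of `v'` in `v` and let `z''` be the orthogonal complement of `z'` in
`z`.  Then `v'' ⊕ z''` is a Lie subalgebra of `s` if and only if `v'' = 0` or `z' = 0`. -/
theorem statement8
    {v z : Type*}
    [NormedAddCommGroup v] [InnerProductSpace ℝ v] [FiniteDimensional ℝ v]
    [NormedAddCommGroup z] [InnerProductSpace ℝ z] [FiniteDimensional ℝ z]
    (β : v →ₗ[ℝ] v →ₗ[ℝ] z) (J : z →ₗ[ℝ] v →ₗ[ℝ] v)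
    (halt : ∀ U : v, β U U = 0)
    (hJdef : ∀ (Z : z) (U V : v), ⟪J Z U, V⟫ = ⟪β U V, Z⟫)
    (hJsq : ∀ (Z : z) (U : v), J Z (J Z U) = (-⟪Z, Z⟫) • U)
    (B : (ℝ × v × z) → (ℝ × v × z) → (ℝ × v × z))
    (hB : ∀ (r r' : ℝ) (U U' : v) (X X' : z),
      B (r, U, X) (r', U', X')
        = (0, (r / 2) • U' - (r' / 2) • U, β U U' + r • X' - r' • X))
    (v' : Submodule ℝ v) (z' : Submodule ℝ z)
    (hinv : ∀ Z₀ ∈ z', ∀ P ∈ v', J Z₀ P ∈ v') :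
    (∀ x ∈ (⊥ : Submodule ℝ ℝ).prod (v'ᗮ.prod z'ᗮ),
      ∀ y ∈ (⊥ : Submodule ℝ ℝ).prod (v'ᗮ.prod z'ᗮ),
        B x y ∈ (⊥ : Submodule ℝ ℝ).prod (v'ᗮ.prod z'ᗮ))
    ↔ (v'ᗮ = ⊥ ∨ z' = ⊥) := by
  have hanti : ∀ U V : v, β U V = - β V U := by
    intro U V
    have h := halt (U + V)
    simp only [map_add, LinearMap.add_apply, halt] at h
    have h2 : β U V + β V U = 0 := by
      rw [← h]; abel
    exact eq_neg_of_add_eq_zero_left h2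
  constructor
  · intro hcl
    by_contra hc
    push_neg at hc
    obtain ⟨hv, hz⟩ := hc
    obtain ⟨U, hU, hU0⟩ := Submodule.exists_mem_ne_zero_of_ne_bot hv
    obtain ⟨Z, hZ, hZ0⟩ := Submodule.exists_mem_ne_zero_of_ne_bot hz
    have hmem : J Z U ∈ v'ᗮ := by
      rw [Submodule.mem_orthogonal']
      intro P hP
      have h1 : ⟪J Z U, P⟫ = ⟪β U P, Z⟫ := hJdef Z U P
      have h2 : ⟪J Z P, U⟫ = ⟪β P U, Z⟫ := hJdef Z P U
      have h3 : ⟪J Z P, U⟫ = 0 := hU _ (hinv Z hZ P hP)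
      rw [h1, hanti U P, inner_neg_left, ← h2, h3, neg_zero]
    have hperp : ∀ U' ∈ v'ᗮ, ⟪J Z U, U'⟫ = 0 := by
      intro U' hU'
      have hx : ((0 : ℝ), U, (0 : z)) ∈ (⊥ : Submodule ℝ ℝ).prod (v'ᗮ.prod z'ᗮ) := by
        simp [Submodule.mem_prod, hU]
      have hy : ((0 : ℝ), U', (0 : z)) ∈ (⊥ : Submodule ℝ ℝ).prod (v'ᗮ.prod z'ᗮ) := by
        simp [Submodule.mem_prod, hU']
      have := hcl _ hx _ hy
      rw [hB] at this
      simp only [Submodule.mem_prod] at this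
      have hβ : β U U' ∈ z'ᗮ := by
        have h3 := this.2.2
        simpa using h3
      have h0 : ⟪β U U', Z⟫ = 0 := by
        rw [real_inner_comm]
        exact hβ Z hZ
      rw [hJdef Z U U', h0]
    have hJ0 : J Z U = 0 := by
      have := hperp (J Z U) hmem
      exact inner_self_eq_zero.mp this
    have h4 := hJsq Z U
    rw [hJ0, map_zero] at h4
    have h5 : ⟪Z, Z⟫ = 0 := by
      by_contra hne
      have : U = 0 := by
        have := h4.symm
        rw [smul_eq_zero] at this
        rcases this with h | h
        · exact absurd (neg_eq_zero.mp h) hne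
        · exact absurd h hU0
      exact hU0 this
    exact hZ0 (inner_self_eq_zero.mp h5)
  · rintro (h | h) x hx y hy
    · obtain ⟨r, U, X⟩ := x
      obtain ⟨r', U', X'⟩ := y
      simp only [Submodule.mem_prod, Submodule.mem_bot, h] at hx hy
      obtain ⟨rfl, rfl, hX⟩ := hx
      obtain ⟨rfl, rfl, hX'⟩ := hy
      rw [hB]
      simp [Submodule.mem_prod, halt]
    · obtain ⟨r, U, X⟩ := x
      obtain ⟨r', U', X'⟩ := y
      simp only [Submodule.mem_prod, Submodule.mem_bot] at hx hy
      obtain ⟨rfl, hU, hX⟩ := hx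
      obtain ⟨rfl, hU', hX'⟩ := hy
      rw [hB]
      simp only [Submodule.mem_prod, Submodule.mem_bot, h,
        Submodule.bot_orthogonal_eq_top, Submodule.mem_top, and_true]
      refine ⟨trivial, ?_⟩
      simp
end

section
/- Let s = a ⊕ v ⊕ z be a Damek-Ricci algebra. Let v' ⊆ v and z' ⊆ z be linear subspaces such that J_Z(v') ⊆ v' for all Z ∈ z'. Let V, W ∈ v', Y, Z ∈ z', r, t ∈ ℝ, let U ∈ v be orthogonal to v' and let X ∈ z be orthogonal to z'. Set ξ := V + Y + rA, η := U + X, ζ := W + Z + tA. Then ⟨[ξ,η], ζ⟩ + ⟨[ξ,ζ], η⟩ + ⟨ξ, [η,ζ]⟩ = ⟨J_X V, W⟩. -/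
open scoped RealInnerProductSpace

/-- Let `s = a ⊕ v ⊕ z = ℝ × v × z` be a Damek-Ricci algebra, with bracket
`[(r,U,X),(r',U',X')] = (0, (r/2)U' - (r'/2)U, [U,U'] + rX' - r'X)` and inner product
`⟨(r,U,X),(s,V,Y)⟩ = rs + ⟨U,V⟩ + ⟨X,Y⟩` (so `A = (1,0,0)`).  Let `v' ⊆ v` and `z' ⊆ z` be
linear subspaces such that `J_Z(v') ⊆ v'` for all `Z ∈ z'`.  Let `V, W ∈ v'`, `Y, Z ∈ z'`,
`r, t ∈ ℝ`, let `U ∈ v` be orthogonal to `v'` and let `X ∈ z` be orthogonal to `z'`.  Set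
`ξ := V + Y + rA`, `η := U + X`, `ζ := W + Z + tA`.  Then
`⟨[ξ,η], ζ⟩ + ⟨[ξ,ζ], η⟩ + ⟨ξ, [η,ζ]⟩ = ⟨J_X V, W⟩`. -/
theorem statement9
    {v z : Type*}
    [NormedAddCommGroup v] [InnerProductSpace ℝ v] [FiniteDimensional ℝ v]
    [NormedAddCommGroup z] [InnerProductSpace ℝ z] [FiniteDimensional ℝ z]
    (β : v →ₗ[ℝ] v →ₗ[ℝ] z) (J : z →ₗ[ℝ] v →ₗ[ℝ] v)
    (halt : ∀ U : v, β U U = 0)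
    (hJdef : ∀ (Z : z) (U V : v), ⟪J Z U, V⟫ = ⟪β U V, Z⟫)
    (hJsq : ∀ (Z : z) (U : v), J Z (J Z U) = (-⟪Z, Z⟫) • U)
    (B : (ℝ × v × z) → (ℝ × v × z) → (ℝ × v × z))
    (hB : ∀ (r r' : ℝ) (U U' : v) (X X' : z),
      B (r, U, X) (r', U', X')
        = (0, (r / 2) • U' - (r' / 2) • U, β U U' + r • X' - r' • X))
    (ip : (ℝ × v × z) → (ℝ × v × z) → ℝ)
    (hip : ∀ (r s : ℝ) (U V : v) (X Y : z),
      ip (r, U, X) (s, V, Y) = r * s + ⟪U, V⟫ + ⟪X, Y⟫)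
    (v' : Submodule ℝ v) (z' : Submodule ℝ z)
    (hinv : ∀ Z₀ ∈ z', ∀ P ∈ v', J Z₀ P ∈ v')
    (V W : v) (hV : V ∈ v') (hW : W ∈ v')
    (Y Z : z) (hY : Y ∈ z') (hZ : Z ∈ z')
    (r t : ℝ)
    (U : v) (hU : U ∈ v'ᗮ) (X : z) (hX : X ∈ z'ᗮ) :
    ip (B (r, V, Y) (0, U, X)) (t, W, Z)
      + ip (B (r, V, Y) (t, W, Z)) (0, U, X)
      + ip (r, V, Y) (B (0, U, X) (t, W, Z)) = ⟪J X V, W⟫ := by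

  have hUo : ∀ P ∈ v', ⟪P, U⟫ = 0 := fun P hP => hU P hP
  have hXo : ∀ Q ∈ z', ⟪Q, X⟫ = 0 := fun Q hQ => hX Q hQ
  have hβanti : ∀ a b : v, β a b = - β b a := by
    intro a b
    have h := halt (a + b)
    simp only [map_add, LinearMap.add_apply, halt, zero_add, add_zero] at h
    exact eq_neg_of_add_eq_zero_left ((add_comm (β b a) (β a b)) ▸ h)
  -- ⟨β V U, Z⟩ = ⟨J Z V, U⟩ = 0
  have h1 : ⟪β V U, Z⟫ = 0 := by
    rw [← hJdef]
    exact hUo _ (hinv Z hZ V hV)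
  -- ⟨β V W, X⟩ = ⟪J X V, W⟫
  have h2 : ⟪β V W, X⟫ = ⟪J X V, W⟫ := (hJdef X V W).symm
  -- ⟨Y, β U W⟩ = 0
  have h3 : ⟪Y, β U W⟫ = 0 := by
    rw [real_inner_comm, hβanti, inner_neg_left, ← hJdef]
    simp [real_inner_comm, hUo _ (hinv Y hY W hW)]
  rw [hB, hB, hB, hip, hip, hip]
  simp only [inner_add_left, inner_add_right, inner_sub_left, inner_sub_right,
    inner_smul_left, inner_smul_right, real_inner_comm U W, hUo W hW, hUo V hV,
    hXo Z hZ, hXo Y hY, h1, h2, h3, RCLike.ofReal_real_eq_id, id]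
  have hUW : ⟪U, W⟫ = 0 := by rw [real_inner_comm]; exact hUo W hW
  have hXZ2 : ⟪X, Z⟫ = 0 := by rw [real_inner_comm]; exact hXo Z hZ
  simp [hUW, hXZ2]
end

section
/- Let k₊, k₋ ≥ 1 and let V₁ ∈ ℍ^{k₊} and V₂ ∈ ℍ^{k₋} be nonzero vectors. Consider the action of the group Sp(1) × Sp(k₊) × Sp(k₋) on ℍ^{k₊} ⊕ ℍ^{k₋} given by (q, g, h)·(x, y) = (g·x·conj(q), h·y·conj(q)), where q is a unit quaternion and g, h are quaternionic unitary matrices. Let Σ := ℝ·(V₁, 0) + ℝ·(0, V₂). Then: (i) for every (x, y) ∈ ℍ^{k₊} ⊕ ℍ^{k₋} there exists a group element mapping (x, y) into Σ; and (ii) for every purely imaginary quaternion ζ (Re ζ = 0), all quaternionic skew-Hermitian matrices A ∈ Mat_{k₊}(ℍ), B ∈ Mat_{k₋}(ℍ) with A* = −A, B* = −B, and all p = (p₁, p₂) ∈ Σ and w ∈ Σ, one has Re⟨(A·p₁ − p₁·ζ, B·p₂ − p₂·ζ), w⟩ = 0, where ⟨·,·⟩ is the standard quaternionic Hermitian inner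 product on ℍ^{k₊} ⊕ ℍ^{k₋}. Hence the two-dimensional real subspace Σ meets every orbit of this action and meets each orbit orthogonally, so the action is polar with section Σ. -/
open Matrix Finset Quaternion
open scoped Quaternion

namespace St14
noncomputable section
variable {k : ℕ}

def qip (u v : Fin k → ℍ[ℝ]) : ℍ[ℝ] := star u ⬝ᵥ v

lemma qip_eq (u v : Fin k → ℍ[ℝ]) : qip u v = ∑ j, star (u j) * v j := rfl

lemma coe_sum {ι : Type*} (s : Finset ι) (f : ι → ℝ) :
    ((∑ j ∈ s, f j : ℝ) : ℍ[ℝ]) = ∑ j ∈ s, ((f j : ℝ) : ℍ[ℝ]) := by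
  classical
  induction s using Finset.induction with
  | empty => simp
  | insert _ _ h ih => rw [Finset.sum_insert h, Finset.sum_insert h, Quaternion.coe_add, ih]

lemma re_sum {ι : Type*} (s : Finset ι) (f : ι → ℍ[ℝ]) :
    (∑ j ∈ s, f j).re = ∑ j ∈ s, (f j).re := by
  classical
  induction s using Finset.induction with
  | empty => simp
  | insert _ _ h ih => simp [Finset.sum_insert h, ih]

lemma qip_self (u : Fin k → ℍ[ℝ]) :
    qip u u = ((∑ j, Quaternion.normSq (u j) : ℝ) : ℍ[ℝ]) := by
  rw [qip_eq, coe_sum]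
  exact Finset.sum_congr rfl fun j _ => Quaternion.star_mul_self (u j)

lemma qip_star (u v : Fin k → ℍ[ℝ]) : star (qip u v) = qip v u := by
  simp [qip_eq, StarMul.star_mul]

lemma qip_sub_left (u v x : Fin k → ℍ[ℝ]) :
    qip (fun i => u i - v i) x = qip u x - qip v x := by
  simp [qip_eq, sub_mul, Finset.sum_sub_distrib]

lemma qip_sub_right (u v x : Fin k → ℍ[ℝ]) :
    qip x (fun i => u i - v i) = qip x u - qip x v := by
  simp [qip_eq, mul_sub, Finset.sum_sub_distrib]

lemma qip_scale_left (u x : Fin k → ℍ[ℝ]) (e : ℍ[ℝ]) :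
    qip (fun i => u i * e) x = star e * qip u x := by
  simp [qip_eq, StarMul.star_mul, Finset.mul_sum, mul_assoc]

lemma qip_scale_right (u x : Fin k → ℍ[ℝ]) (e : ℍ[ℝ]) :
    qip x (fun i => u i * e) = qip x u * e := by
  simp [qip_eq, Finset.sum_mul, mul_assoc]

def rk1 (v : Fin k → ℍ[ℝ]) (β : ℍ[ℝ]) : Matrix (Fin k) (Fin k) ℍ[ℝ] :=
  1 + Matrix.of (fun i j => v i * β * star (v j))

lemma rk1_mulVec (v : Fin k → ℍ[ℝ]) (β : ℍ[ℝ]) (x : Fin k → ℍ[ℝ]) :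
    (rk1 v β).mulVec x = fun i => x i + v i * (β * qip v x) := by
  funext i
  simp only [rk1, add_mulVec, one_mulVec, Pi.add_apply]
  congr 1
  simp only [mulVec, dotProduct, Matrix.of_apply, qip_eq, Finset.mul_sum]
  exact Finset.sum_congr rfl fun j _ => by noncomm_ring

lemma rk1_conjTranspose (v : Fin k → ℍ[ℝ]) (β : ℍ[ℝ]) :
    (rk1 v β)ᴴ = rk1 v (star β) := by
  simp only [rk1, conjTranspose_add, conjTranspose_one]
  congr 1
  refine Matrix.ext fun i j => ?_
  simp [StarMul.star_mul, mul_assoc]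

lemma coe_mid (r : ℝ) (a b : ℍ[ℝ]) : a * ↑r * b = r • (a * b) := by
  rw [← Quaternion.coe_commutes, Quaternion.coe_mul_eq_smul, smul_mul_assoc]

lemma rk1_mul (v : Fin k → ℍ[ℝ]) (β₂ β₁ : ℍ[ℝ]) :
    rk1 v β₂ * rk1 v β₁ = rk1 v (β₂ + β₁ + β₂ * qip v v * β₁) := by
  have key : (Matrix.of fun i j => v i * β₂ * star (v j)) *
        (Matrix.of fun i j => v i * β₁ * star (v j))
      = Matrix.of fun i j => v i * (β₂ * qip v v * β₁) * star (v j) := by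
    refine Matrix.ext fun i j => ?_
    simp only [Matrix.mul_apply, Matrix.of_apply]
    rw [qip_self]
    calc ∑ l, v i * β₂ * star (v l) * (v l * β₁ * star (v j))
        = ∑ l, Quaternion.normSq (v l) • (v i * (β₂ * β₁) * star (v j)) := by
          refine Finset.sum_congr rfl fun l _ => ?_
          rw [show v i * β₂ * star (v l) * (v l * β₁ * star (v j))
              = v i * β₂ * (star (v l) * v l) * (β₁ * star (v j)) by noncomm_ring,
            Quaternion.star_mul_self, coe_mid]
          try congr 1
          try noncomm_ring
      _ = (∑ l, Quaternion.normSq (v l)) • (v i * (β₂ * β₁) * star (v j)) :=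
          (Finset.sum_smul).symm
      _ = v i * (β₂ * ((∑ l, Quaternion.normSq (v l) : ℝ) : ℍ[ℝ]) * β₁) * star (v j) := by
          rw [coe_mid, mul_smul_comm, smul_mul_assoc]
          try congr 1
          try noncomm_ring
  have hsum : (Matrix.of fun i j => v i * β₂ * star (v j)) +
        ((Matrix.of fun i j => v i * β₁ * star (v j)) +
          (Matrix.of fun i j => v i * (β₂ * qip v v * β₁) * star (v j)))
      = Matrix.of fun i j => v i * (β₂ + β₁ + β₂ * qip v v * β₁) * star (v j) :=
    Matrix.ext fun i j => by
      simp only [Matrix.add_apply, Matrix.of_apply]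
      noncomm_ring
  unfold rk1
  rw [add_mul, mul_add, mul_add, key]
  simp only [one_mul, mul_one]
  rw [← hsum]
  abel

lemma rk1_zero (v : Fin k → ℍ[ℝ]) : rk1 v 0 = 1 := by
  have : (Matrix.of fun i j => v i * (0:ℍ[ℝ]) * star (v j)) = 0 :=
    Matrix.ext fun i j => by simp
  rw [rk1, this, add_zero]

lemma rk1_unitary (e : Fin k → ℍ[ℝ]) (he : qip e e = 1) (β : ℍ[ℝ])
    (hβ : star β + β + star β * β = 0) : (rk1 e β)ᴴ * rk1 e β = 1 := by
  rw [rk1_conjTranspose, rk1_mul, he, mul_one, hβ, rk1_zero]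

lemma qip_smul_left (r : ℝ) (u x : Fin k → ℍ[ℝ]) : qip (r • u) x = r • qip u x := by
  simp [qip_eq, Finset.smul_sum, smul_mul_assoc]

lemma qip_smul_right (r : ℝ) (u x : Fin k → ℍ[ℝ]) : qip x (r • u) = r • qip x u := by
  simp [qip_eq, Finset.smul_sum, mul_smul_comm]

lemma smul_rearrange (r s : ℝ) (p q : ℍ[ℝ]) : (r • p) * (s • q) = (r * s) • (p * q) := by
  rw [smul_mul_assoc, mul_smul_comm, smul_smul]

lemma mapToLine (x V : Fin k → ℍ[ℝ]) (hV : V ≠ 0) :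
    ∃ g : Matrix (Fin k) (Fin k) ℍ[ℝ], gᴴ * g = 1 ∧ ∃ c : ℝ, g.mulVec x = c • V := by
  classical
  have hsVpos : 0 < ∑ j, Quaternion.normSq (V j) := by
    obtain ⟨j, hj⟩ : ∃ j, V j ≠ 0 := by
      by_contra hcon; push_neg at hcon; exact hV (funext hcon)
    refine Finset.sum_pos' (fun i _ => Quaternion.normSq_nonneg) ⟨j, Finset.mem_univ j, ?_⟩
    exact lt_of_le_of_ne Quaternion.normSq_nonneg (Ne.symm (Quaternion.normSq_ne_zero.mpr hj))
  set sV := ∑ j, Quaternion.normSq (V j) with hsV_def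
  by_cases hx0 : x = 0
  · refine ⟨1, by simp, 0, ?_⟩
    rw [Matrix.one_mulVec, hx0, zero_smul]
  have hsUpos : 0 < ∑ j, Quaternion.normSq (x j) := by
    obtain ⟨j, hj⟩ : ∃ j, x j ≠ 0 := by
      by_contra hcon; push_neg at hcon; exact hx0 (funext hcon)
    refine Finset.sum_pos' (fun i _ => Quaternion.normSq_nonneg) ⟨j, Finset.mem_univ j, ?_⟩
    exact lt_of_le_of_ne Quaternion.normSq_nonneg (Ne.symm (Quaternion.normSq_ne_zero.mpr hj))
  set sU := ∑ j, Quaternion.normSq (x j) with hsU_def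
  set a := qip x V with ha_def
  set ρ := Real.sqrt (Quaternion.normSq a) with hρ_def
  set lq : ℍ[ℝ] := if a = 0 then 1 else ρ⁻¹ • star a with hlq_def
  have hl1 : lq * star lq = 1 := by
    by_cases h0 : a = 0
    · simp [hlq_def, h0]
    · have hρ2 : ρ * ρ = Quaternion.normSq a := Real.mul_self_sqrt Quaternion.normSq_nonneg
      have hρpos : 0 < ρ := Real.sqrt_pos.mpr
        (lt_of_le_of_ne Quaternion.normSq_nonneg (Ne.symm (Quaternion.normSq_ne_zero.mpr h0)))
      rw [hlq_def, if_neg h0, Quaternion.star_smul, star_star, smul_mul_assoc,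
        mul_smul_comm, smul_smul, Quaternion.star_mul_self, Quaternion.smul_coe]
      rw [show ρ⁻¹ * ρ⁻¹ * Quaternion.normSq a = 1 from by rw [← hρ2]; field_simp,
        Quaternion.coe_one]
  have hl2 : star lq * lq = 1 := by
    have h := hl1
    rw [Quaternion.self_mul_star] at h
    rw [Quaternion.star_mul_self]
    exact h
  have halq : a * lq = ((ρ : ℝ) : ℍ[ℝ]) := by
    by_cases h0 : a = 0
    · rw [hρ_def, h0]
      simp
    · have hρ2 : ρ * ρ = Quaternion.normSq a := Real.mul_self_sqrt Quaternion.normSq_nonneg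
      have hρpos : 0 < ρ := Real.sqrt_pos.mpr
        (lt_of_le_of_ne Quaternion.normSq_nonneg (Ne.symm (Quaternion.normSq_ne_zero.mpr h0)))
      rw [hlq_def, if_neg h0, mul_smul_comm, Quaternion.self_mul_star, Quaternion.smul_coe]
      congr 1
      rw [← hρ2]
      field_simp
  set c := Real.sqrt sU / Real.sqrt sV with hc_def
  have hc2 : c * c * sV = sU := by
    rw [hc_def, div_mul_div_comm, Real.mul_self_sqrt hsUpos.le, Real.mul_self_sqrt hsVpos.le,
      div_mul_cancel₀]
    exact hsVpos.ne'
  set ε := c • lq with hε_def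
  set v' : Fin k → ℍ[ℝ] := fun i => V i * ε with hv'_def
  have hεε : star ε * ε = ((c * c : ℝ) : ℍ[ℝ]) := by
    rw [hε_def, Quaternion.star_smul, smul_mul_assoc, mul_smul_comm, smul_smul, hl2,
      ← Quaternion.coe_one, Quaternion.smul_coe, mul_one]
  have hv'v' : qip v' v' = ((sU : ℝ) : ℍ[ℝ]) := by
    rw [hv'_def, qip_scale_left, qip_scale_right, qip_self, ← hsV_def,
      Quaternion.coe_mul_eq_smul, mul_smul_comm, hεε, Quaternion.smul_coe]
    congr 1
    rw [mul_comm]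
    exact hc2
  have hxv' : qip x v' = ((c * ρ : ℝ) : ℍ[ℝ]) := by
    rw [hv'_def, qip_scale_right, ← ha_def, hε_def, mul_smul_comm, halq, Quaternion.smul_coe]
  have hv'x : qip v' x = ((c * ρ : ℝ) : ℍ[ℝ]) := by
    rw [← qip_star x v', hxv', Quaternion.star_coe]
  have hqxx : qip x x = ((sU : ℝ) : ℍ[ℝ]) := by
    rw [qip_self, ← hsU_def]
  have hww : qip (fun i => x i - v' i) (fun i => x i - v' i)
      = ((2*(sU - c*ρ) : ℝ) : ℍ[ℝ]) := by
    rw [qip_sub_left, qip_sub_right, qip_sub_right, hqxx, hxv', hv'x, hv'v']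
    norm_cast
    try ring
  have hwx : qip (fun i => x i - v' i) x = (((sU - c*ρ) : ℝ) : ℍ[ℝ]) := by
    rw [qip_sub_left, hqxx, hv'x]
    norm_cast
  -- the matrix M
  set tV := (Real.sqrt sV)⁻¹ with htV_def
  have hsqV : Real.sqrt sV * Real.sqrt sV = sV := Real.mul_self_sqrt hsVpos.le
  have hsqVne : Real.sqrt sV ≠ 0 := ne_of_gt (Real.sqrt_pos.mpr hsVpos)
  have htV2 : tV * tV * sV = 1 := by
    rw [htV_def]
    field_simp
    try linarith [hsqV]
  set eV : Fin k → ℍ[ℝ] := tV • V with heV_def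
  have heVeV : qip eV eV = 1 := by
    rw [heV_def, qip_smul_left, qip_smul_right, qip_self, ← hsV_def, smul_smul,
      Quaternion.smul_coe, htV2, Quaternion.coe_one]
  set M := rk1 eV (star lq - 1) with hM_def
  have hMu : Mᴴ * M = 1 := by
    rw [hM_def]
    refine rk1_unitary eV heVeV _ ?_
    have hexp : (lq - 1) * (star lq - 1) = lq * star lq - lq - star lq + 1 := by noncomm_ring
    rw [star_sub, star_star, star_one, hexp, hl1]
    abel
  have hMv' : M.mulVec v' = c • V := by
    rw [hM_def, rk1_mulVec]
    funext i
    have h1 : qip eV v' = (tV * sV) • ε := by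
      rw [heV_def, qip_smul_left, hv'_def, qip_scale_right, qip_self, ← hsV_def,
        Quaternion.coe_mul_eq_smul, smul_smul]
    show v' i + eV i * ((star lq - 1) * qip eV v') = (c • V) i
    calc v' i + eV i * ((star lq - 1) * qip eV v')
        = V i * ε + (tV • V i) * ((tV * sV) • ((star lq - 1) * ε)) := by
          rw [h1]
          simp only [heV_def, hv'_def, Pi.smul_apply, mul_smul_comm]
      _ = V i * ε + (tV * (tV * sV)) • (V i * ((star lq - 1) * ε)) := by
          rw [smul_rearrange]
      _ = V i * ε + V i * ((star lq - 1) * ε) := by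
          rw [show tV * (tV * sV) = 1 from by rw [← mul_assoc]; exact htV2, one_smul]
      _ = V i * (star lq * ε) := by
          rw [← mul_add]
          congr 1
          noncomm_ring
      _ = V i * ((c : ℝ) : ℍ[ℝ]) := by
          rw [hε_def, mul_smul_comm, hl2, ← Quaternion.coe_one, Quaternion.smul_coe, mul_one]
      _ = (c • V) i := by
          rw [← Quaternion.coe_commutes, Quaternion.coe_mul_eq_smul]
          rfl
  by_cases hw0 : (fun i => x i - v' i) = (0 : Fin k → ℍ[ℝ])
  · have hxv : x = v' := funext fun i => by
      have := congrFun hw0 i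
      simpa [sub_eq_zero] using this
    exact ⟨M, hMu, c, by rw [hxv]; exact hMv'⟩
  · have hwexists : ∃ j, x j - v' j ≠ 0 := by
      by_contra hcon
      push_neg at hcon
      exact hw0 (funext fun i => hcon i)
    obtain ⟨j0, hj0⟩ := hwexists
    set sw := ∑ j, Quaternion.normSq (x j - v' j) with hsw_def
    have hswpos : 0 < sw := by
      refine Finset.sum_pos' (fun i _ => Quaternion.normSq_nonneg) ⟨j0, Finset.mem_univ j0, ?_⟩
      exact lt_of_le_of_ne Quaternion.normSq_nonneg (Ne.symm (Quaternion.normSq_ne_zero.mpr hj0))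
    have hswe : sw = 2*(sU - c*ρ) := by
      have h := hww
      simp only [qip_self] at h
      rw [← hsw_def] at h
      exact Quaternion.coe_injective h
    set tw := (Real.sqrt sw)⁻¹ with htw_def
    have hsqw : Real.sqrt sw * Real.sqrt sw = sw := Real.mul_self_sqrt hswpos.le
    have hsqwne : Real.sqrt sw ≠ 0 := ne_of_gt (Real.sqrt_pos.mpr hswpos)
    have htw2 : tw * tw * sw = 1 := by
      rw [htw_def]
      field_simp
      try linarith [hsqw]
    set ew : Fin k → ℍ[ℝ] := tw • (fun i => x i - v' i) with hew_def
    have hewew : qip ew ew = 1 := by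
      rw [hew_def, qip_smul_left, qip_smul_right, hww, smul_smul, Quaternion.smul_coe,
        ← hswe, htw2, Quaternion.coe_one]
    set H := rk1 ew (((-2 : ℝ) : ℍ[ℝ])) with hH_def
    have hHu : Hᴴ * H = 1 := by
      rw [hH_def]
      refine rk1_unitary ew hewew _ ?_
      have h2 : ((-2 : ℝ) : ℍ[ℝ]) + ((-2 : ℝ) : ℍ[ℝ])
          + ((-2 : ℝ) : ℍ[ℝ]) * ((-2 : ℝ) : ℍ[ℝ]) = 0 := by
        rw [← Quaternion.coe_mul, ← Quaternion.coe_add, ← Quaternion.coe_add]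
        norm_num
      rw [Quaternion.star_coe]
      exact h2
    have hHx : H.mulVec x = v' := by
      rw [hH_def, rk1_mulVec]
      funext i
      show x i + ew i * (((-2:ℝ):ℍ[ℝ]) * qip ew x) = v' i
      have h2 : qip ew x = ((tw * (sU - c*ρ) : ℝ) : ℍ[ℝ]) := by
        rw [hew_def, qip_smul_left, hwx, Quaternion.smul_coe]
      rw [h2, ← Quaternion.coe_mul, hew_def]
      simp only [Pi.smul_apply]
      rw [smul_mul_assoc, ← Quaternion.coe_commutes, Quaternion.coe_mul_eq_smul, smul_smul]
      rw [show tw * (-2 * (tw * (sU - c*ρ))) = -1 from by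
        linear_combination (tw*tw) * hswe - htw2, neg_one_smul]
      abel
    refine ⟨M * H, ?_, c, ?_⟩
    · rw [Matrix.conjTranspose_mul, Matrix.mul_assoc, ← Matrix.mul_assoc Mᴴ M H, hMu,
        Matrix.one_mul, hHu]
    · rw [← Matrix.mulVec_mulVec, hHx, hMv']


lemma hre (p q : ℍ[ℝ]) : (star q * p).re = (star p * q).re := by
  rw [show star q * p = star (star p * q) by rw [StarMul.star_mul, star_star]]
  exact Quaternion.re_star _

lemma skew_re_zero (V : Fin k → ℍ[ℝ]) (A : Matrix (Fin k) (Fin k) ℍ[ℝ]) (hA : Aᴴ = -A) :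
    (qip (A.mulVec V) V).re = 0 := by
  have hT : (qip (A.mulVec V) V).re = ∑ i, ∑ j, (star (A i j * V j) * V i).re := by
    rw [qip_eq, re_sum]
    refine Finset.sum_congr rfl fun i _ => ?_
    rw [show (A.mulVec V) i = ∑ j, A i j * V j from rfl, star_sum, Finset.sum_mul, re_sum]
  have hskew : ∀ i j, (star (A j i * V i) * V j).re = -((star (A i j * V j) * V i).re) := by
    intro i j
    have h1 : star (A j i) = -(A i j) := by
      have h2 := congrFun (congrFun hA i) j
      simpa using h2
    calc (star (A j i * V i) * V j).re
        = (star (V i) * (star (A j i) * V j)).re := by rw [StarMul.star_mul, mul_assoc]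
      _ = -((star (V i) * (A i j * V j)).re) := by rw [h1]; simp
      _ = -((star (A i j * V j) * V i).re) := by rw [hre (A i j * V j) (V i)]
  have hL : (∑ i, ∑ j, (star (A i j * V j) * V i).re)
      = -(∑ i, ∑ j, (star (A i j * V j) * V i).re) := by
    conv_lhs => rw [Finset.sum_comm]
    rw [show (∑ j, ∑ i, (star (A i j * V j) * V i).re)
        = ∑ j, ∑ i, -((star (A j i * V i) * V j).re) from
      Finset.sum_congr rfl fun j _ => Finset.sum_congr rfl fun i _ => by rw [hskew j i]]
    simp
  rw [hT]
  linarith [hL]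

lemma orth (V : Fin k → ℍ[ℝ]) (ζ : ℍ[ℝ]) (hζ : ζ.re = 0)
    (A : Matrix (Fin k) (Fin k) ℍ[ℝ]) (hA : Aᴴ = -A) (c d : ℝ) :
    (star (fun i => A.mulVec (c • V) i - (c • V) i * ζ) ⬝ᵥ (d • V)).re = 0 := by
  have e1 : (star (fun i => A.mulVec (c • V) i - (c • V) i * ζ) ⬝ᵥ (d • V))
      = qip (fun i => A.mulVec (c • V) i - (c • V) i * ζ) (d • V) := rfl
  rw [e1, qip_sub_left, qip_scale_left]
  have hterm1 : (qip (fun i => A.mulVec (c • V) i) (d • V)).re = 0 := by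
    have : (fun i => A.mulVec (c • V) i) = c • A.mulVec V := by
      funext i; rw [Matrix.mulVec_smul]
    rw [this, qip_smul_left, qip_smul_right]
    have := skew_re_zero V A hA
    simp [this]
  have hterm2 : (star ζ * qip (c • V) (d • V)).re = 0 := by
    rw [qip_smul_left, qip_smul_right, qip_self, mul_smul_comm, mul_smul_comm,
      ← Quaternion.coe_commutes, Quaternion.coe_mul_eq_smul]
    simp [hζ]
  rw [show ∀ a b : ℍ[ℝ], (a - b).re = a.re - b.re from fun a b => rfl, hterm1, hterm2]
  norm_num

end
end St14

open St14 in
/-- Let `k₊, k₋ ≥ 1` and let `V₁ ∈ ℍ^{k₊}`, `V₂ ∈ ℍ^{k₋}` be nonzero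
vectors.  Consider the action of `Sp(1) × Sp(k₊) × Sp(k₋)` on `ℍ^{k₊} ⊕ ℍ^{k₋}` given by
`(q, g, h)·(x, y) = (g·x·conj(q), h·y·conj(q))`, where `q` is a unit quaternion and `g, h`
are quaternionic unitary matrices.  Let `Σ := ℝ·(V₁,0) + ℝ·(0,V₂)`.  Then: (i) every
`(x, y)` can be mapped into `Σ` by a group element; and (ii) for every purely imaginary
quaternion `ζ`, all quaternionic skew-Hermitian matrices `A`, `B`, and all `p, w ∈ Σ`
(written `p = (c•V₁, d•V₂)`, `w = (c'•V₁, d'•V₂)`), one has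
`Re⟨(A·p₁ - p₁·ζ, B·p₂ - p₂·ζ), w⟩ = 0`.  Hence the two-dimensional real subspace `Σ` meets
every orbit of this action and meets each orbit orthogonally, so the action is polar with
section `Σ`. -/
theorem statement14 (kp km : ℕ) (hkp : 1 ≤ kp) (hkm : 1 ≤ km)
    (V₁ : Fin kp → ℍ[ℝ]) (V₂ : Fin km → ℍ[ℝ]) (hV₁ : V₁ ≠ 0) (hV₂ : V₂ ≠ 0) :
    (∀ (x : Fin kp → ℍ[ℝ]) (y : Fin km → ℍ[ℝ]),
      ∃ (q : ℍ[ℝ]) (g : Matrix (Fin kp) (Fin kp) ℍ[ℝ]) (h : Matrix (Fin km) (Fin km) ℍ[ℝ]),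
        q * star q = 1 ∧ gᴴ * g = 1 ∧ hᴴ * h = 1 ∧
        ∃ c d : ℝ, g.mulVec (fun i => x i * star q) = c • V₁ ∧
          h.mulVec (fun i => y i * star q) = d • V₂) ∧
    (∀ ζ : ℍ[ℝ], ζ.re = 0 →
      ∀ (A : Matrix (Fin kp) (Fin kp) ℍ[ℝ]) (B : Matrix (Fin km) (Fin km) ℍ[ℝ]),
        Aᴴ = -A → Bᴴ = -B →
        ∀ c d c' d' : ℝ,
          (star (fun i => A.mulVec (c • V₁) i - (c • V₁) i * ζ) ⬝ᵥ (c' • V₁)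
            + star (fun i => B.mulVec (d • V₂) i - (d • V₂) i * ζ) ⬝ᵥ (d' • V₂)).re
            = 0) := by
  constructor
  · intro x y
    obtain ⟨g, hg, c, hgc⟩ := mapToLine x V₁ hV₁
    obtain ⟨h, hh, d, hhd⟩ := mapToLine y V₂ hV₂
    refine ⟨1, g, h, by simp, hg, hh, c, d, ?_, ?_⟩
    · rw [show (fun i => x i * star (1:ℍ[ℝ])) = x from funext fun i => by simp]
      exact hgc
    · rw [show (fun i => y i * star (1:ℍ[ℝ])) = y from funext fun i => by simp]
      exact hhd
  · intro ζ hζ A B hA hB c d c' d'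
    rw [show ∀ a b : ℍ[ℝ], (a + b).re = a.re + b.re from fun _ _ => rfl,
      orth V₁ ζ hζ A hA c c', orth V₂ ζ hζ B hB d d', add_zero]
end
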